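/- Fix real parameters a, b, c. For all natural numbers l₁, l₂, l with l ≤ l₁ + l₂, every natural number ν, and every real x with 0 < x < 1, the complementary polynomials of the hypergeometric equation satisfy the composition law Σ_{ν₁=0}^{ν} binom(ν,ν₁)·𝒫_{ν₁}(x,l₁)·𝒫_{ν−ν₁}(x,l₂) = Σ_{ν₁=0}^{ν} binom(ν,ν₁)·𝒫_{ν₁}(x,l₁+l₂−l)·𝒫_{ν−ν₁}(x,l). -/

import Mathlib

/-- Complementary polynomial of the hypergeometric equation:
`𝒫_ν(x,l) = x^(ν+1-c-l) (1-x)^(ν-l+c-a-b) (dᵛ/dtᵛ)(t^(c-1+l)(1-t)^(l+a+b-c)) |_{t=x}`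
(rpow powers). -/
noncomputable def complHypergeom (a b c : ℝ) (l ν : ℕ) (x : ℝ) : ℝ :=
  x ^ ((ν : ℝ) + 1 - c - (l : ℝ)) * (1 - x) ^ ((ν : ℝ) - (l : ℝ) + c - a - b) *
    iteratedDeriv ν
      (fun t : ℝ => t ^ (c - 1 + (l : ℝ)) * (1 - t) ^ ((l : ℝ) + a + b - c)) x

private lemma iteratedDerivWithin_eq_iteratedDeriv_of_isOpen {s : Set ℝ} (hs : IsOpen s)
    {f : ℝ → ℝ} (k : ℕ) {x : ℝ} (hx : x ∈ s) :
    iteratedDerivWithin k f s x = iteratedDeriv k f x := by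
  rw [iteratedDerivWithin, iteratedDeriv, iteratedFDerivWithin_of_isOpen k hs hx]

private lemma hasDerivAt_iteratedDeriv_of_contDiffOn {s : Set ℝ} (hs : IsOpen s) {f : ℝ → ℝ}
    (hf : ContDiffOn ℝ ⊤ f s) (k : ℕ) {x : ℝ} (hx : x ∈ s) :
    HasDerivAt (iteratedDeriv k f) (iteratedDeriv (k + 1) f x) x := by
  have h1 : DifferentiableWithinAt ℝ (iteratedDerivWithin k f s) s x :=
    hf.differentiableOn_iteratedDerivWithin (by exact_mod_cast lt_top_iff_ne_top.2 (by simp))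
      hs.uniqueDiffOn x hx
  have h2 : DifferentiableAt ℝ (iteratedDerivWithin k f s) x :=
    h1.differentiableAt (hs.mem_nhds hx)
  have hEq : iteratedDeriv k f =ᶠ[nhds x] iteratedDerivWithin k f s :=
    Filter.eventuallyEq_of_mem (hs.mem_nhds hx)
      (fun y hy => (iteratedDerivWithin_eq_iteratedDeriv_of_isOpen hs k hy).symm)
  have h3 : DifferentiableAt ℝ (iteratedDeriv k f) x := h2.congr_of_eventuallyEq hEq
  have := h3.hasDerivAt
  rwa [← iteratedDeriv_succ] at this

/-- Leibniz rule for iterated derivatives at points of an open set. -/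
private lemma iteratedDeriv_mul_of_isOpen {s : Set ℝ} (hs : IsOpen s) {f g : ℝ → ℝ}
    (hf : ContDiffOn ℝ ⊤ f s) (hg : ContDiffOn ℝ ⊤ g s) (n : ℕ) :
    ∀ x ∈ s, iteratedDeriv n (fun t => f t * g t) x
      = ∑ k ∈ Finset.range (n + 1),
          (n.choose k : ℝ) * iteratedDeriv k f x * iteratedDeriv (n - k) g x := by
  induction n with
  | zero => intro x hx; simp
  | succ n IH =>
    intro x hx
    rw [iteratedDeriv_succ]
    have hEq : deriv (iteratedDeriv n (fun t => f t * g t)) x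
        = deriv (fun y => ∑ k ∈ Finset.range (n + 1),
            (n.choose k : ℝ) * iteratedDeriv k f y * iteratedDeriv (n - k) g y) x :=
      Filter.EventuallyEq.deriv_eq (Filter.eventuallyEq_of_mem (hs.mem_nhds hx) IH)
    rw [hEq]
    have hterm : ∀ k ∈ Finset.range (n + 1),
        HasDerivAt (fun y => (n.choose k : ℝ) * iteratedDeriv k f y * iteratedDeriv (n - k) g y)
          ((n.choose k : ℝ) * (iteratedDeriv (k + 1) f x * iteratedDeriv (n - k) g x
            + iteratedDeriv k f x * iteratedDeriv (n - k + 1) g x)) x := by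
      intro k _
      have h1 := hasDerivAt_iteratedDeriv_of_contDiffOn hs hf k hx
      have h2 := hasDerivAt_iteratedDeriv_of_contDiffOn hs hg (n - k) hx
      have := (h1.mul h2).const_mul ((n.choose k : ℝ))
      simpa [mul_assoc, mul_add] using this
    have hsum : HasDerivAt (fun y => ∑ k ∈ Finset.range (n + 1),
          (n.choose k : ℝ) * iteratedDeriv k f y * iteratedDeriv (n - k) g y)
        (∑ k ∈ Finset.range (n + 1),
          (n.choose k : ℝ) * (iteratedDeriv (k + 1) f x * iteratedDeriv (n - k) g x
            + iteratedDeriv k f x * iteratedDeriv (n - k + 1) g x)) x :=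
      HasDerivAt.fun_sum hterm
    rw [hsum.deriv]
    -- combinatorial identity (Pascal's rule)
    simp only [mul_assoc]
    rw [show n + 1 + 1 = n + 2 from rfl,
      Finset.sum_choose_succ_mul (fun i j => iteratedDeriv i f x * iteratedDeriv j g x) n,
      ← Finset.sum_add_distrib]
    refine Finset.sum_congr rfl fun k hk => ?_
    have hkn : k ≤ n := Nat.lt_succ_iff.mp (Finset.mem_range.mp hk)
    have : n + 1 - k = n - k + 1 := by omega
    rw [this]
    ring

private lemma contDiffOn_rpow_mul (p q : ℝ) :
    ContDiffOn ℝ ⊤ (fun t : ℝ => t ^ p * (1 - t) ^ q) (Set.Ioo (0:ℝ) 1) := by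
  intro x hx
  apply ContDiffAt.contDiffWithinAt
  have h1 : ContDiffAt ℝ ⊤ (fun t : ℝ => t ^ p) x :=
    Real.contDiffAt_rpow_const_of_ne (ne_of_gt hx.1)
  have h2 : ContDiffAt ℝ ⊤ (fun t : ℝ => (1 - t) ^ q) x := by
    have hb : ContDiffAt ℝ ⊤ (fun s : ℝ => s ^ q) (1 - x) :=
      Real.contDiffAt_rpow_const_of_ne (ne_of_gt (by have := hx.2; linarith : (0:ℝ) < 1 - x))
    exact hb.comp x (contDiffAt_const.sub contDiffAt_id)
  exact h1.mul h2

private lemma complHypergeom_sum_eq (a b c : ℝ) (l₁ l₂ : ℕ) (ν : ℕ) (x : ℝ)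
    (hx0 : 0 < x) (hx1 : x < 1) :
    (∑ ν₁ ∈ Finset.range (ν + 1),
        (Nat.choose ν ν₁ : ℝ) * complHypergeom a b c l₁ ν₁ x
          * complHypergeom a b c l₂ (ν - ν₁) x)
    = x ^ ((ν : ℝ) + 2 - 2*c - ((l₁ + l₂ : ℕ) : ℝ))
        * (1 - x) ^ ((ν : ℝ) - ((l₁ + l₂ : ℕ) : ℝ) + 2*c - 2*a - 2*b)
        * iteratedDeriv ν (fun t : ℝ => t ^ (2*c - 2 + ((l₁ + l₂ : ℕ) : ℝ))
            * (1 - t) ^ (((l₁ + l₂ : ℕ) : ℝ) + 2*a + 2*b - 2*c)) x := by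
  have hx : x ∈ Set.Ioo (0:ℝ) 1 := ⟨hx0, hx1⟩
  have hx1' : (0:ℝ) < 1 - x := by linarith
  set f₁ : ℝ → ℝ := fun t => t ^ (c - 1 + (l₁:ℝ)) * (1 - t) ^ ((l₁:ℝ) + a + b - c) with hf₁
  set f₂ : ℝ → ℝ := fun t => t ^ (c - 1 + (l₂:ℝ)) * (1 - t) ^ ((l₂:ℝ) + a + b - c) with hf₂
  have hEqOn : Set.EqOn
      (fun t : ℝ => t ^ (2*c - 2 + ((l₁+l₂:ℕ):ℝ)) * (1 - t) ^ (((l₁+l₂:ℕ):ℝ) + 2*a + 2*b - 2*c))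
      (fun t => f₁ t * f₂ t) (Set.Ioo (0:ℝ) 1) := by
    intro t ht
    have ht0 : (0:ℝ) < t := ht.1
    have ht1 : (0:ℝ) < 1 - t := by have := ht.2; simp only [Set.mem_Ioo] at *; linarith
    simp only [hf₁, hf₂]
    rw [show 2*c - 2 + ((l₁+l₂:ℕ):ℝ) = (c - 1 + (l₁:ℝ)) + (c - 1 + (l₂:ℝ)) by push_cast; ring,
      show ((l₁+l₂:ℕ):ℝ) + 2*a + 2*b - 2*c = ((l₁:ℝ) + a + b - c) + ((l₂:ℝ) + a + b - c) by
        push_cast; ring,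
      Real.rpow_add ht0, Real.rpow_add ht1]
    ring
  have hD : iteratedDeriv ν (fun t : ℝ => t ^ (2*c - 2 + ((l₁+l₂:ℕ):ℝ))
        * (1 - t) ^ (((l₁+l₂:ℕ):ℝ) + 2*a + 2*b - 2*c)) x
      = ∑ k ∈ Finset.range (ν + 1),
          (ν.choose k : ℝ) * iteratedDeriv k f₁ x * iteratedDeriv (ν - k) f₂ x := by
    rw [hEqOn.iteratedDeriv_of_isOpen isOpen_Ioo ν hx]
    exact iteratedDeriv_mul_of_isOpen isOpen_Ioo (contDiffOn_rpow_mul _ _)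
      (contDiffOn_rpow_mul _ _) ν x hx
  rw [hD, Finset.mul_sum]
  refine Finset.sum_congr rfl fun ν₁ hν₁ => ?_
  have hle : ν₁ ≤ ν := Nat.lt_succ_iff.mp (Finset.mem_range.mp hν₁)
  have hcast : ((ν - ν₁ : ℕ) : ℝ) = (ν : ℝ) - (ν₁ : ℝ) := by
    rw [Nat.cast_sub hle]
  have hα : (ν:ℝ) + 2 - 2*c - ((l₁+l₂:ℕ):ℝ)
      = ((ν₁:ℝ) + 1 - c - (l₁:ℝ)) + (((ν - ν₁ : ℕ):ℝ) + 1 - c - (l₂:ℝ)) := by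
    rw [hcast]; push_cast; ring
  have hβ : (ν:ℝ) - ((l₁+l₂:ℕ):ℝ) + 2*c - 2*a - 2*b
      = ((ν₁:ℝ) - (l₁:ℝ) + c - a - b) + (((ν - ν₁ : ℕ):ℝ) - (l₂:ℝ) + c - a - b) := by
    rw [hcast]; push_cast; ring
  simp only [complHypergeom, ← hf₁, ← hf₂]
  rw [hα, hβ, Real.rpow_add hx0, Real.rpow_add hx1']
  ring

theorem complHypergeom_composition (a b c : ℝ) (l₁ l₂ l : ℕ) (hl : l ≤ l₁ + l₂)
    (ν : ℕ) (x : ℝ) (hx0 : 0 < x) (hx1 : x < 1) :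
    (∑ ν₁ ∈ Finset.range (ν + 1),
        (Nat.choose ν ν₁ : ℝ) * complHypergeom a b c l₁ ν₁ x
          * complHypergeom a b c l₂ (ν - ν₁) x)
      = ∑ ν₁ ∈ Finset.range (ν + 1),
          (Nat.choose ν ν₁ : ℝ) * complHypergeom a b c (l₁ + l₂ - l) ν₁ x
            * complHypergeom a b c l (ν - ν₁) x := by
  rw [complHypergeom_sum_eq a b c l₁ l₂ ν x hx0 hx1,
    complHypergeom_sum_eq a b c (l₁ + l₂ - l) l ν x hx0 hx1,
    show l₁ + l₂ - l + l = l₁ + l₂ by omega]
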